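/- arXiv:2105.01759 — 2 statements merged into one kernel-verified Lean document; each statement's English description precedes it below -/
import Mathlib

section
/- For n ≥ 1, m ≥ 1 and a ∈ (0,∞), there exists a constant B ∈ (0,∞) such that for all (x,z) ∈ ℝ^{n+m} with (x,z) ≠ (0,0), |ΔN| ≤ B |x|²/N³, where N = (|x|⁴ + a|z|²)^{1/4} and ΔN = Σ_{i=1}^n X_i² N is the sub-Laplacian applied to N. -/
open MeasureTheory Real Set

noncomputable section

abbrev Pt (n m : ℕ) : Type := (Fin n → ℝ) × (Fin m → ℝ)

/-- The step-two Carnot group vector field `X_i` at `p`, as a tangent vector. -/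
def Xvec {n m : ℕ} (Λ : Fin m → Matrix (Fin n) (Fin n) ℝ) (i : Fin n) (p : Pt n m) :
    Pt n m :=
  (fun j => if j = i then (1 : ℝ) else 0, fun k => (1 / 2) * ∑ l, Λ k i l * p.1 l)

/-- `X_i f`, the derivative of `f` along the vector field `X_i`. -/
def XD {n m : ℕ} (Λ : Fin m → Matrix (Fin n) (Fin n) ℝ)
    (f : Pt n m → ℝ) (i : Fin n) (p : Pt n m) : ℝ :=
  fderiv ℝ f p (Xvec Λ i p)

/-- Length of the sub-gradient, `|∇f| = (Σᵢ (Xᵢ f)²)^{1/2}`. -/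
def gradLen {n m : ℕ} (Λ : Fin m → Matrix (Fin n) (Fin n) ℝ)
    (f : Pt n m → ℝ) (p : Pt n m) : ℝ :=
  Real.sqrt (∑ i, (XD Λ f i p) ^ 2)

/-- Sub-Laplacian `Δf = Σᵢ Xᵢ² f`. -/
def subLap {n m : ℕ} (Λ : Fin m → Matrix (Fin n) (Fin n) ℝ)
    (f : Pt n m → ℝ) (p : Pt n m) : ℝ :=
  ∑ i, XD Λ (fun y => XD Λ f i y) i p

/-- Homogeneous norm `N(x,z) = (|x|⁴ + a|z|²)^{1/4}`. -/
def Nnorm {n m : ℕ} (a : ℝ) (p : Pt n m) : ℝ :=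
  ((∑ i, (p.1 i) ^ 2) ^ 2 + a * ∑ k, (p.2 k) ^ 2) ^ ((1 : ℝ) / 4)

namespace Statement11Aux

noncomputable def L1 (n m : ℕ) (i : Fin n) : Pt n m →L[ℝ] ℝ :=
  (ContinuousLinearMap.proj i).comp (ContinuousLinearMap.fst ℝ (Fin n → ℝ) (Fin m → ℝ))
noncomputable def L2 (n m : ℕ) (k : Fin m) : Pt n m →L[ℝ] ℝ :=
  (ContinuousLinearMap.proj k).comp (ContinuousLinearMap.snd ℝ (Fin n → ℝ) (Fin m → ℝ))

variable {n m : ℕ}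

/-- `u = |x|⁴ + a|z|²`. -/
def uu (a : ℝ) (p : Pt n m) : ℝ := (∑ i, (p.1 i) ^ 2) ^ 2 + a * ∑ k, (p.2 k) ^ 2

/-- `V_i = X_i u`. -/
def VV (Λ : Fin m → Matrix (Fin n) (Fin n) ℝ) (a : ℝ) (i : Fin n) (p : Pt n m) : ℝ :=
  4 * ((∑ j, (p.1 j)^2) * p.1 i) + a * ∑ k, p.2 k * (∑ l, Λ k i l * p.1 l)

/-- `W_i = X_i V_i`. -/
def WW (Λ : Fin m → Matrix (Fin n) (Fin n) ℝ) (a : ℝ) (i : Fin n) (p : Pt n m) : ℝ :=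
  8 * (p.1 i)^2 + 4 * (∑ j, (p.1 j)^2) + (a/2) * ∑ k, (∑ l, Λ k i l * p.1 l)^2

lemma uu_pos {a : ℝ} (ha : 0 < a) {p : Pt n m} (hp : p ≠ 0) : 0 < uu a p := by
  have h1 : (0:ℝ) ≤ ∑ i, (p.1 i) ^ 2 := Finset.sum_nonneg fun i _ => sq_nonneg _
  have h2 : (0:ℝ) ≤ ∑ k, (p.2 k) ^ 2 := Finset.sum_nonneg fun k _ => sq_nonneg _
  have h3 : (0:ℝ) ≤ uu a p := by
    have := mul_nonneg ha.le h2
    have := pow_nonneg h1 2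
    unfold uu; linarith
  rcases h3.lt_or_eq with h | h
  · exact h
  exfalso
  have hx1 : (∑ i, (p.1 i) ^ 2) = 0 := by
    by_contra hc
    have : 0 < (∑ i, (p.1 i) ^ 2) ^ 2 := pow_pos (lt_of_le_of_ne h1 (Ne.symm hc)) 2
    have h4 := mul_nonneg ha.le h2
    have : 0 < uu a p := by unfold uu; linarith
    linarith
  have hx2 : (∑ k, (p.2 k) ^ 2) = 0 := by
    by_contra hc
    have : 0 < a * ∑ k, (p.2 k) ^ 2 := mul_pos ha (lt_of_le_of_ne h2 (Ne.symm hc))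
    have : 0 < uu a p := by unfold uu; nlinarith [pow_nonneg h1 2]
    linarith
  apply hp
  have e1 : ∀ i, p.1 i = 0 := fun i => by
    have := (Finset.sum_eq_zero_iff_of_nonneg (fun j _ => sq_nonneg (p.1 j))).1 hx1 i
      (Finset.mem_univ i)
    exact pow_eq_zero_iff two_ne_zero |>.1 this
  have e2 : ∀ k, p.2 k = 0 := fun k => by
    have := (Finset.sum_eq_zero_iff_of_nonneg (fun j _ => sq_nonneg (p.2 j))).1 hx2 k
      (Finset.mem_univ k)
    exact pow_eq_zero_iff two_ne_zero |>.1 this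
  exact Prod.ext (funext e1) (funext e2)

lemma hasFDerivAt_uu (a : ℝ) (p : Pt n m) :
    ∃ U : Pt n m →L[ℝ] ℝ, HasFDerivAt (uu a) U p ∧
      ∀ w : Pt n m, U w = 4 * (∑ i, (p.1 i)^2) * (∑ i, p.1 i * w.1 i)
        + 2 * a * (∑ k, p.2 k * w.2 k) := by
  have hx : ∀ i : Fin n, HasFDerivAt (fun y : Pt n m => y.1 i) (L1 n m i) p :=
    fun i => (L1 n m i).hasFDerivAt
  have hz : ∀ k : Fin m, HasFDerivAt (fun y : Pt n m => y.2 k) (L2 n m k) p :=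
    fun k => (L2 n m k).hasFDerivAt
  have hρ : HasFDerivAt (fun y : Pt n m => ∑ i, (y.1 i)^2)
      (∑ i, (p.1 i • L1 n m i + p.1 i • L1 n m i)) p := by
    refine HasFDerivAt.fun_sum fun i _ => ?_
    simpa [pow_two, Pi.mul_def] using (hx i).mul (hx i)
  have hρ2 : HasFDerivAt (fun y : Pt n m => (∑ i, (y.1 i)^2)^2)
      ((∑ i, (p.1 i)^2) • (∑ i, (p.1 i • L1 n m i + p.1 i • L1 n m i))
        + (∑ i, (p.1 i)^2) • (∑ i, (p.1 i • L1 n m i + p.1 i • L1 n m i))) p := by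
    simpa [pow_two, Pi.mul_def] using hρ.mul hρ
  have hσ : HasFDerivAt (fun y : Pt n m => a * ∑ k, (y.2 k)^2)
      (a • (∑ k, (p.2 k • L2 n m k + p.2 k • L2 n m k))) p := by
    refine HasFDerivAt.const_mul ?_ a
    refine HasFDerivAt.fun_sum fun k _ => ?_
    simpa [pow_two, Pi.mul_def] using (hz k).mul (hz k)
  refine ⟨_, hρ2.add hσ, fun w => ?_⟩
  simp only [ContinuousLinearMap.add_apply, ContinuousLinearMap.smul_apply,
    ContinuousLinearMap.coe_sum', Finset.sum_apply, smul_eq_mul]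
  have h1 : ∀ i : Fin n, (L1 n m i) w = w.1 i := fun _ => rfl
  have h2 : ∀ k : Fin m, (L2 n m k) w = w.2 k := fun _ => rfl
  simp only [h1, h2, ← Finset.sum_add_distrib, Finset.mul_sum]
  congr 1
  · refine Finset.sum_congr rfl fun i _ => by rw [← Finset.mul_sum]; ring
  · refine Finset.sum_congr rfl fun k _ => by ring

lemma hasFDerivAt_VV (Λ : Fin m → Matrix (Fin n) (Fin n) ℝ) (a : ℝ) (i : Fin n) (p : Pt n m) :
    ∃ D : Pt n m →L[ℝ] ℝ, HasFDerivAt (VV Λ a i) D p ∧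
      ∀ w : Pt n m, D w = 8 * (∑ j, p.1 j * w.1 j) * p.1 i
        + 4 * (∑ j, (p.1 j)^2) * w.1 i
        + a * ∑ k, (w.2 k * (∑ l, Λ k i l * p.1 l) + p.2 k * (∑ l, Λ k i l * w.1 l)) := by
  have hx : ∀ j : Fin n, HasFDerivAt (fun y : Pt n m => y.1 j) (L1 n m j) p :=
    fun j => (L1 n m j).hasFDerivAt
  have hz : ∀ k : Fin m, HasFDerivAt (fun y : Pt n m => y.2 k) (L2 n m k) p :=
    fun k => (L2 n m k).hasFDerivAt
  have hρ : HasFDerivAt (fun y : Pt n m => ∑ j, (y.1 j)^2)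
      (∑ j, (p.1 j • L1 n m j + p.1 j • L1 n m j)) p := by
    refine HasFDerivAt.fun_sum fun j _ => ?_
    simpa [pow_two, Pi.mul_def] using (hx j).mul (hx j)
  have hA : HasFDerivAt (fun y : Pt n m => 4 * ((∑ j, (y.1 j)^2) * y.1 i))
      ((4:ℝ) • ((∑ j, (p.1 j)^2) • L1 n m i
        + p.1 i • (∑ j, (p.1 j • L1 n m j + p.1 j • L1 n m j)))) p :=
    (hρ.mul (hx i)).const_mul 4
  have hLam : ∀ k : Fin m, HasFDerivAt (fun y : Pt n m => ∑ l, Λ k i l * y.1 l)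
      (∑ l, Λ k i l • L1 n m l) p := by
    intro k
    refine HasFDerivAt.fun_sum fun l _ => ?_
    exact (hx l).const_mul _
  have hB : HasFDerivAt (fun y : Pt n m => a * ∑ k, y.2 k * (∑ l, Λ k i l * y.1 l))
      (a • ∑ k, (p.2 k • (∑ l, Λ k i l • L1 n m l)
        + (∑ l, Λ k i l * p.1 l) • L2 n m k)) p := by
    refine HasFDerivAt.const_mul ?_ a
    exact HasFDerivAt.fun_sum fun k _ => (hz k).mul (hLam k)
  refine ⟨_, hA.add hB, fun w => ?_⟩
  have h1 : ∀ j : Fin n, (L1 n m j) w = w.1 j := fun _ => rfl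
  have h2 : ∀ k : Fin m, (L2 n m k) w = w.2 k := fun _ => rfl
  simp only [ContinuousLinearMap.add_apply, ContinuousLinearMap.smul_apply,
    ContinuousLinearMap.coe_sum', Finset.sum_apply, smul_eq_mul, h1, h2]
  have e2 : ∀ k : Fin m, p.2 k * (∑ l, Λ k i l * w.1 l) + (∑ l, Λ k i l * p.1 l) * w.2 k
      = w.2 k * (∑ l, Λ k i l * p.1 l) + p.2 k * (∑ l, Λ k i l * w.1 l) := fun k => by ring
  rw [Finset.sum_congr rfl fun k _ => e2 k]
  have e1 : ∑ j, (p.1 j * w.1 j + p.1 j * w.1 j) = 2 * ∑ j, p.1 j * w.1 j := by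
    rw [Finset.mul_sum]; exact Finset.sum_congr rfl fun j _ => by ring
  rw [e1]
  ring

lemma xvec_eval1 (Λ : Fin m → Matrix (Fin n) (Fin n) ℝ) (i : Fin n) (p : Pt n m) (j : Fin n) :
    (Xvec Λ i p).1 j = if j = i then (1:ℝ) else 0 := rfl

lemma xvec_eval2 (Λ : Fin m → Matrix (Fin n) (Fin n) ℝ) (i : Fin n) (p : Pt n m) (k : Fin m) :
    (Xvec Λ i p).2 k = (1/2) * ∑ l, Λ k i l * p.1 l := rfl

lemma xd_N (Λ : Fin m → Matrix (Fin n) (Fin n) ℝ) {a : ℝ} (ha : 0 < a)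
    {p : Pt n m} (hp : p ≠ 0) (i : Fin n) :
    XD Λ (Nnorm a) i p = 1/4 * ((uu a p) ^ (-(3:ℝ)/4) * VV Λ a i p) := by
  obtain ⟨U, hU, hUval⟩ := hasFDerivAt_uu a p
  have hne : uu a p ≠ 0 := (uu_pos ha hp).ne'
  have hN : HasFDerivAt (Nnorm a) (((1:ℝ)/4 * uu a p ^ ((1:ℝ)/4 - 1)) • U) p :=
    hU.rpow_const (Or.inl hne)
  rw [XD, hN.fderiv]
  simp only [ContinuousLinearMap.smul_apply, smul_eq_mul, hUval]
  rw [show (1:ℝ)/4 - 1 = -(3:ℝ)/4 by norm_num]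
  have ex : ∑ j, p.1 j * (Xvec Λ i p).1 j = p.1 i := by
    simp [xvec_eval1, mul_ite]
  have ez : ∑ k, p.2 k * (Xvec Λ i p).2 k
      = (1/2) * ∑ k, p.2 k * (∑ l, Λ k i l * p.1 l) := by
    rw [Finset.mul_sum]
    exact Finset.sum_congr rfl fun k _ => by rw [xvec_eval2]; ring
  rw [ex, ez, VV]
  ring

lemma xd2_N (Λ : Fin m → Matrix (Fin n) (Fin n) ℝ)
    (hskew : ∀ k, (Λ k).transpose = -(Λ k)) {a : ℝ} (ha : 0 < a)
    {p : Pt n m} (hp : p ≠ 0) (i : Fin n) :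
    XD Λ (fun y => XD Λ (Nnorm a) i y) i p
      = 1/4 * ((uu a p) ^ (-(3:ℝ)/4) * WW Λ a i p)
        - 3/16 * ((uu a p) ^ (-(7:ℝ)/4) * (VV Λ a i p)^2) := by
  obtain ⟨U, hU, hUval⟩ := hasFDerivAt_uu a p
  obtain ⟨D, hD, hDval⟩ := hasFDerivAt_VV Λ a i p
  have hne : uu a p ≠ 0 := (uu_pos ha hp).ne'
  have hr : HasFDerivAt (fun y => uu a y ^ (-(3:ℝ)/4))
      ((-(3:ℝ)/4 * uu a p ^ (-(3:ℝ)/4 - 1)) • U) p := hU.rpow_const (Or.inl hne)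
  have hg : HasFDerivAt (fun y => 1/4 * ((uu a y) ^ (-(3:ℝ)/4) * VV Λ a i y))
      (((1:ℝ)/4) • ((uu a p ^ (-(3:ℝ)/4)) • D
        + VV Λ a i p • ((-(3:ℝ)/4 * uu a p ^ (-(3:ℝ)/4 - 1)) • U))) p :=
    (hr.mul hD).const_mul _
  have hev : (fun y => XD Λ (Nnorm a) i y)
      =ᶠ[nhds p] (fun y => 1/4 * ((uu a y) ^ (-(3:ℝ)/4) * VV Λ a i y)) := by
    filter_upwards [isOpen_ne.mem_nhds hp] with y hy
    exact xd_N Λ ha hy i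
  rw [XD, hev.fderiv_eq, hg.fderiv]
  simp only [ContinuousLinearMap.smul_apply, ContinuousLinearMap.add_apply, smul_eq_mul,
    hUval, hDval]
  have hΛii : ∀ k : Fin m, Λ k i i = 0 := by
    intro k
    have := congrFun (congrFun (hskew k) i) i
    simp [Matrix.transpose_apply] at this
    linarith
  have ex : ∑ j, p.1 j * (Xvec Λ i p).1 j = p.1 i := by
    simp [xvec_eval1, mul_ite]
  have ex2 : ∀ j, (Xvec Λ i p).1 j = if j = i then (1:ℝ) else 0 := xvec_eval1 Λ i p
  have ez : ∑ k, p.2 k * (Xvec Λ i p).2 k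
      = (1/2) * ∑ k, p.2 k * (∑ l, Λ k i l * p.1 l) := by
    rw [Finset.mul_sum]
    exact Finset.sum_congr rfl fun k _ => by rw [xvec_eval2]; ring
  have eD : ∑ k, ((Xvec Λ i p).2 k * (∑ l, Λ k i l * p.1 l)
        + p.2 k * (∑ l, Λ k i l * (Xvec Λ i p).1 l))
      = (1/2) * ∑ k, (∑ l, Λ k i l * p.1 l)^2 := by
    rw [Finset.mul_sum]
    refine Finset.sum_congr rfl fun k _ => ?_
    have h1 : ∑ l, Λ k i l * (Xvec Λ i p).1 l = 0 := by
      simp [ex2, mul_ite, hΛii k]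
    rw [xvec_eval2, h1]
    ring
  have exi : (Xvec Λ i p).1 i = 1 := by simp [xvec_eval1]
  rw [ex, ez, eD, exi, show -(3:ℝ)/4 - 1 = -(7:ℝ)/4 by norm_num, WW, VV]
  ring

lemma subLap_eq (Λ : Fin m → Matrix (Fin n) (Fin n) ℝ)
    (hskew : ∀ k, (Λ k).transpose = -(Λ k)) {a : ℝ} (ha : 0 < a)
    {p : Pt n m} (hp : p ≠ 0) :
    subLap Λ (Nnorm a) p
      = 1/4 * ((uu a p) ^ (-(3:ℝ)/4) * ∑ i, WW Λ a i p)
        - 3/16 * ((uu a p) ^ (-(7:ℝ)/4) * ∑ i, (VV Λ a i p)^2) := by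
  rw [subLap]
  rw [Finset.sum_congr rfl fun i _ => xd2_N Λ hskew ha hp i]
  rw [Finset.sum_sub_distrib, Finset.mul_sum, Finset.mul_sum, Finset.mul_sum, Finset.mul_sum]

end Statement11Aux

set_option maxHeartbeats 1000000 in
theorem statement_11_aux (n m : ℕ) (hn : 1 ≤ n) (hm : 1 ≤ m)
    (Λ : Fin m → Matrix (Fin n) (Fin n) ℝ)
    (hskew : ∀ k, (Λ k).transpose = -(Λ k))
    (hli : LinearIndependent ℝ Λ)
    (a : ℝ) (ha : 0 < a) :
    ∃ B : ℝ, 0 < B ∧ ∀ p : Pt n m, p ≠ 0 →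
      |subLap Λ (Nnorm a) p| ≤ B * (∑ i, (p.1 i) ^ 2) / (Nnorm a p) ^ 3 := by
  classical
  open Statement11Aux in
  set M : ℝ := ∑ k, ∑ i, ∑ l, (Λ k i l)^2 with hM
  have hM0 : 0 ≤ M :=
    Finset.sum_nonneg fun k _ => Finset.sum_nonneg fun i _ =>
      Finset.sum_nonneg fun l _ => sq_nonneg _
  set C1 : ℝ := 8 + 4*n + (a/2)*M with hC1
  set C2 : ℝ := 32 + 2*a*M with hC2
  have hC1pos : 0 < C1 := by
    have : (0:ℝ) ≤ (n:ℝ) := Nat.cast_nonneg n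
    have := mul_nonneg (by linarith : (0:ℝ) ≤ a/2) hM0
    simp only [hC1]; linarith
  have hC2pos : 0 < C2 := by
    have := mul_nonneg (by linarith : (0:ℝ) ≤ 2*a) hM0
    simp only [hC2]; linarith
  clear_value M C1 C2
  refine ⟨1/4 * C1 + 3/16 * C2, by positivity, fun p hp => ?_⟩
  set ρ : ℝ := ∑ i, (p.1 i)^2 with hρ
  set σ : ℝ := ∑ k, (p.2 k)^2 with hσ
  clear_value ρ σ
  have hρ0 : 0 ≤ ρ := by rw [hρ]; exact Finset.sum_nonneg fun i _ => sq_nonneg _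
  have hσ0 : 0 ≤ σ := by rw [hσ]; exact Finset.sum_nonneg fun k _ => sq_nonneg _
  have hu : 0 < uu a p := uu_pos ha hp
  have huρ : ρ^2 ≤ uu a p := by
    have : 0 ≤ a * σ := mul_nonneg ha.le hσ0
    simp only [uu, ← hρ, ← hσ]; linarith
  have huσ : a * σ ≤ uu a p := by
    have : 0 ≤ ρ^2 := sq_nonneg ρ
    simp only [uu, ← hρ, ← hσ]; linarith
  -- Cauchy-Schwarz bounds
  have hS : ∀ (k : Fin m) (i : Fin n),
      (∑ l, Λ k i l * p.1 l)^2 ≤ (∑ l, (Λ k i l)^2) * ρ := by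
    intro k i
    simpa [hρ] using Finset.sum_mul_sq_le_sq_mul_sq Finset.univ (fun l => Λ k i l) p.1
  have hSsum : ∑ k, ∑ i, (∑ l, Λ k i l * p.1 l)^2 ≤ M * ρ := by
    calc ∑ k, ∑ i, (∑ l, Λ k i l * p.1 l)^2
        ≤ ∑ k, ∑ i, (∑ l, (Λ k i l)^2) * ρ := by
          refine Finset.sum_le_sum fun k _ => Finset.sum_le_sum fun i _ => hS k i
      _ = M * ρ := by
          rw [hM, Finset.sum_mul]
          exact Finset.sum_congr rfl fun k _ => by rw [Finset.sum_mul]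
  have hSsum' : ∑ i, ∑ k, (∑ l, Λ k i l * p.1 l)^2 ≤ M * ρ := by
    rw [Finset.sum_comm]; exact hSsum
  -- bound on ∑ WW
  have hWnonneg : 0 ≤ ∑ i, WW Λ a i p := by
    refine Finset.sum_nonneg fun i _ => ?_
    have h1 : (0:ℝ) ≤ 8 * (p.1 i)^2 := by positivity
    have h2 : (0:ℝ) ≤ (a/2) * ∑ k, (∑ l, Λ k i l * p.1 l)^2 := by
      refine mul_nonneg (by linarith) (Finset.sum_nonneg fun k _ => sq_nonneg _)
    have h3 : (0:ℝ) ≤ 4 * ρ := by linarith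
    simp only [WW, ← hρ]; linarith
  have hWsum : ∑ i, WW Λ a i p ≤ C1 * ρ := by
    have e1 : ∑ i, (8:ℝ) * (p.1 i)^2 = 8 * ρ := by rw [hρ, Finset.mul_sum]
    have e2 : ∑ (_i : Fin n), 4 * ρ = (n:ℝ) * (4 * ρ) := by
      rw [Finset.sum_const, Finset.card_univ, Fintype.card_fin, nsmul_eq_mul]
    have e3 : ∑ i, (a/2) * (∑ k, (∑ l, Λ k i l * p.1 l)^2)
        = (a/2) * ∑ i, ∑ k, (∑ l, Λ k i l * p.1 l)^2 := (Finset.mul_sum _ _ _).symm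
    have e : ∑ i, WW Λ a i p
        = 8 * ρ + (n:ℝ) * (4 * ρ) + (a/2) * ∑ i, ∑ k, (∑ l, Λ k i l * p.1 l)^2 := by
      calc ∑ i, WW Λ a i p
          = ∑ i, ((8:ℝ) * (p.1 i)^2 + 4 * ρ + (a/2) * (∑ k, (∑ l, Λ k i l * p.1 l)^2)) :=
            Finset.sum_congr rfl fun i _ => by rw [WW, ← hρ]
        _ = _ := by rw [Finset.sum_add_distrib, Finset.sum_add_distrib, e1, e2, e3]
    rw [e, hC1]
    have := mul_le_mul_of_nonneg_left hSsum' (by linarith : (0:ℝ) ≤ a/2)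
    nlinarith [Nat.cast_nonneg (α := ℝ) n]
  -- bound on ∑ VV²
  have hVnonneg : 0 ≤ ∑ i, (VV Λ a i p)^2 :=
    Finset.sum_nonneg fun i _ => sq_nonneg _
  have hVsum : ∑ i, (VV Λ a i p)^2 ≤ C2 * (uu a p * ρ) := by
    have hT : ∀ i : Fin n, (∑ k, p.2 k * (∑ l, Λ k i l * p.1 l))^2
        ≤ σ * ∑ k, (∑ l, Λ k i l * p.1 l)^2 := by
      intro i
      simpa [hσ] using Finset.sum_mul_sq_le_sq_mul_sq Finset.univ p.2
        (fun k => ∑ l, Λ k i l * p.1 l)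
    have hVi : ∀ i : Fin n, (VV Λ a i p)^2
        ≤ 32 * (ρ * p.1 i)^2 + 2 * a^2 * (∑ k, p.2 k * (∑ l, Λ k i l * p.1 l))^2 := by
      intro i
      simp only [VV, ← hρ]
      nlinarith [sq_nonneg (4 * (ρ * p.1 i) - a * ∑ k, p.2 k * (∑ l, Λ k i l * p.1 l))]
    calc ∑ i, (VV Λ a i p)^2
        ≤ ∑ i, (32 * (ρ * p.1 i)^2
            + 2 * a^2 * (∑ k, p.2 k * (∑ l, Λ k i l * p.1 l))^2) :=
          Finset.sum_le_sum fun i _ => hVi i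
      _ = 32 * ρ^2 * ρ + 2 * a^2 * ∑ i, (∑ k, p.2 k * (∑ l, Λ k i l * p.1 l))^2 := by
          rw [Finset.sum_add_distrib]
          congr 1
          · rw [show (32:ℝ)*ρ^2*ρ = 32*ρ^2*∑ i, (p.1 i)^2 from by rw [← hρ],
              Finset.mul_sum]
            exact Finset.sum_congr rfl fun i _ => by ring
          · exact (Finset.mul_sum _ _ _).symm
      _ ≤ 32 * ρ^2 * ρ + 2 * a^2 * (σ * (M * ρ)) := by
          have h1 : ∑ i, (∑ k, p.2 k * (∑ l, Λ k i l * p.1 l))^2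
              ≤ σ * (M * ρ) := by
            calc ∑ i, (∑ k, p.2 k * (∑ l, Λ k i l * p.1 l))^2
                ≤ ∑ i, σ * ∑ k, (∑ l, Λ k i l * p.1 l)^2 :=
                  Finset.sum_le_sum fun i _ => hT i
              _ = σ * ∑ i, ∑ k, (∑ l, Λ k i l * p.1 l)^2 := by rw [Finset.mul_sum]
              _ ≤ σ * (M * ρ) := mul_le_mul_of_nonneg_left hSsum' hσ0
          have := mul_le_mul_of_nonneg_left h1 (by positivity : (0:ℝ) ≤ 2*a^2)
          linarith
      _ ≤ C2 * (uu a p * ρ) := by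
          rw [hC2]
          have h2 : ρ^2 * ρ ≤ uu a p * ρ := mul_le_mul_of_nonneg_right huρ hρ0
          have h3 : a^2 * (σ * (M * ρ)) ≤ a * M * (uu a p * ρ) := by
            have h5 : a * σ * (M * ρ) ≤ uu a p * (M * ρ) :=
              mul_le_mul_of_nonneg_right huσ (mul_nonneg hM0 hρ0)
            have h4 := mul_le_mul_of_nonneg_left h5 ha.le
            calc a^2 * (σ * (M * ρ)) = a * (a * σ * (M * ρ)) := by ring
              _ ≤ a * (uu a p * (M * ρ)) := h4
              _ = a * M * (uu a p * ρ) := by ring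
          have h2' := mul_le_mul_of_nonneg_left h2 (by norm_num : (0:ℝ) ≤ 32)
          have h3' := mul_le_mul_of_nonneg_left h3 (by norm_num : (0:ℝ) ≤ 2)
          have e : (32 + 2*a*M) * (uu a p * ρ)
              = 32 * (uu a p * ρ) + 2 * (a * M * (uu a p * ρ)) := by ring
          linarith
  -- rpow arithmetic
  have hr3 : (0:ℝ) < uu a p ^ (-(3:ℝ)/4) := Real.rpow_pos_of_pos hu _
  have hr7u : uu a p ^ (-(7:ℝ)/4) * uu a p = uu a p ^ (-(3:ℝ)/4) := by
    rw [show (-(3:ℝ)/4) = (-(7:ℝ)/4) + 1 by norm_num, Real.rpow_add hu,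
      Real.rpow_one]
  -- the Nnorm cube
  have hN3 : (Nnorm a p)^3 = uu a p ^ ((3:ℝ)/4) := by
    have hNe : Nnorm a p = uu a p ^ ((1:ℝ)/4) := by simp only [Nnorm, uu]
    rw [hNe, ← Real.rpow_natCast (uu a p ^ ((1:ℝ)/4)) 3, ← Real.rpow_mul hu.le]
    norm_num
  have hRHS : ((1:ℝ)/4 * C1 + 3/16 * C2) * ρ / (Nnorm a p)^3
      = (1/4 * C1 + 3/16 * C2) * ρ * uu a p ^ (-(3:ℝ)/4) := by
    rw [hN3, div_eq_mul_inv, ← Real.rpow_neg hu.le]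
    norm_num
  rw [subLap_eq Λ hskew ha hp, hRHS]
  have key1 : 1/4 * (uu a p ^ (-(3:ℝ)/4) * ∑ i, WW Λ a i p)
      ≤ 1/4 * C1 * ρ * uu a p ^ (-(3:ℝ)/4) := by
    have h := mul_le_mul_of_nonneg_left hWsum hr3.le
    have e : 1/4 * C1 * ρ * uu a p ^ (-(3:ℝ)/4)
        = 1/4 * (uu a p ^ (-(3:ℝ)/4) * (C1 * ρ)) := by ring
    linarith
  have key2 : 3/16 * (uu a p ^ (-(7:ℝ)/4) * ∑ i, (VV Λ a i p)^2)
      ≤ 3/16 * C2 * ρ * uu a p ^ (-(3:ℝ)/4) := by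
    have hr7 : (0:ℝ) < uu a p ^ (-(7:ℝ)/4) := Real.rpow_pos_of_pos hu _
    have h := mul_le_mul_of_nonneg_left hVsum hr7.le
    have e : uu a p ^ (-(7:ℝ)/4) * (C2 * (uu a p * ρ))
        = 3/16 * C2 * ρ * uu a p ^ (-(3:ℝ)/4) * (16/3) := by
      rw [← hr7u]; ring
    linarith
  have pos1 : 0 ≤ 1/4 * (uu a p ^ (-(3:ℝ)/4) * ∑ i, WW Λ a i p) := by
    have := mul_nonneg hr3.le hWnonneg; linarith
  have pos2 : 0 ≤ 3/16 * (uu a p ^ (-(7:ℝ)/4) * ∑ i, (VV Λ a i p)^2) := by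
    have hr7 : (0:ℝ) < uu a p ^ (-(7:ℝ)/4) := Real.rpow_pos_of_pos hu _
    have := mul_nonneg hr7.le hVnonneg; linarith
  have hk1 : 0 ≤ 1/4 * C1 * ρ * uu a p ^ (-(3:ℝ)/4) :=
    mul_nonneg (mul_nonneg (mul_nonneg (by norm_num) hC1pos.le) hρ0) hr3.le
  have hk2 : 0 ≤ 3/16 * C2 * ρ * uu a p ^ (-(3:ℝ)/4) :=
    mul_nonneg (mul_nonneg (mul_nonneg (by norm_num) hC2pos.le) hρ0) hr3.le
  have esum : (1/4 * C1 + 3/16 * C2) * ρ * uu a p ^ (-(3:ℝ)/4)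
      = 1/4 * C1 * ρ * uu a p ^ (-(3:ℝ)/4) + 3/16 * C2 * ρ * uu a p ^ (-(3:ℝ)/4) := by
    ring
  rw [abs_sub_le_iff]
  constructor <;> linarith

theorem statement_11 (n m : ℕ) (hn : 1 ≤ n) (hm : 1 ≤ m)
    (Λ : Fin m → Matrix (Fin n) (Fin n) ℝ)
    (hskew : ∀ k, (Λ k).transpose = -(Λ k))
    (hli : LinearIndependent ℝ Λ)
    (a : ℝ) (ha : 0 < a) :
    ∃ B : ℝ, 0 < B ∧ ∀ p : Pt n m, p ≠ 0 →
      |subLap Λ (Nnorm a) p| ≤ B * (∑ i, (p.1 i) ^ 2) / (Nnorm a p) ^ 3 :=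
  statement_11_aux n m hn hm Λ hskew hli a ha
end
end

section
/- For n ≥ 1, m ≥ 1 and a ∈ (0,∞), for all (x,z) ∈ ℝ^{n+m} with (x,z) ≠ (0,0), the sub-Laplacian of N satisfies the exact identity ΔN = (n−1)|x|²/N³ + (|x|²/N³)[ −3 N^{-4}( −a|z|² + (a²/16) Σ_{k,k'=1}^m Σ_{l,l'=1}^n Σ_{i=1}^n Λ^{(k)}_{il} Λ^{(k')}_{il'} (x_l/|x|)(x_{l'}/|x|) z_k z_{k'} ) + (a/8) Σ_{k=1}^m Σ_{l,l'=1}^n Σ_{i=1}^n Λ^{(k)}_{il} Λ^{(k)}_{il'} (x_l/|x|)(x_{l'}/|x|) ] for x ≠ 0, where N = (|x|⁴ + a|z|²)^{1/4} and ΔN = Σ_{i=1}^n X_i² N. -/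
open MeasureTheory Real Set

noncomputable section

namespace S19
variable {n m : ℕ}

def cx (i : Fin n) : Pt n m →L[ℝ] ℝ :=
  (ContinuousLinearMap.proj i).comp (ContinuousLinearMap.fst ℝ (Fin n → ℝ) (Fin m → ℝ))
def cz (k : Fin m) : Pt n m →L[ℝ] ℝ :=
  (ContinuousLinearMap.proj k).comp (ContinuousLinearMap.snd ℝ (Fin n → ℝ) (Fin m → ℝ))
@[simp] lemma cx_apply (i : Fin n) (v : Pt n m) : cx i v = v.1 i := rfl
@[simp] lemma cz_apply (k : Fin m) (v : Pt n m) : cz k v = v.2 k := rfl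
lemma hasX (i : Fin n) (p : Pt n m) : HasFDerivAt (fun q : Pt n m => q.1 i) (cx i) p :=
  (cx i).hasFDerivAt
lemma hasZ (k : Fin m) (p : Pt n m) : HasFDerivAt (fun q : Pt n m => q.2 k) (cz k) p :=
  (cz k).hasFDerivAt

def Af (p : Pt n m) : ℝ := ∑ j, p.1 j ^ 2
def Bf (p : Pt n m) : ℝ := ∑ k, p.2 k ^ 2
def gf (a : ℝ) (p : Pt n m) : ℝ := Af p ^ 2 + a * Bf p
def Lf (Λ : Fin m → Matrix (Fin n) (Fin n) ℝ) (k : Fin m) (i : Fin n) (p : Pt n m) : ℝ :=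
  ∑ l, Λ k i l * p.1 l
def Ff (Λ : Fin m → Matrix (Fin n) (Fin n) ℝ) (a : ℝ) (i : Fin n) (p : Pt n m) : ℝ :=
  4 * Af p * p.1 i + a * ∑ k, p.2 k * Lf Λ k i p
def dA (p : Pt n m) : Pt n m →L[ℝ] ℝ := ∑ j, (((2:ℕ):ℝ) * p.1 j ^ (2-1)) • cx j
def dB (p : Pt n m) : Pt n m →L[ℝ] ℝ := ∑ k, (((2:ℕ):ℝ) * p.2 k ^ (2-1)) • cz k
def dg (a : ℝ) (p : Pt n m) : Pt n m →L[ℝ] ℝ :=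
  (((2:ℕ):ℝ) * Af p ^ (2-1)) • dA p + a • dB p
lemma hasAf (p : Pt n m) : HasFDerivAt Af (dA p) p :=
  HasFDerivAt.fun_sum fun j _ => ((hasDerivAt_pow 2 (p.1 j)).comp_hasFDerivAt p (hasX j p) :)
lemma hasBf (p : Pt n m) : HasFDerivAt Bf (dB p) p :=
  HasFDerivAt.fun_sum fun k _ => ((hasDerivAt_pow 2 (p.2 k)).comp_hasFDerivAt p (hasZ k p) :)
lemma hasgf (a : ℝ) (p : Pt n m) : HasFDerivAt (gf a) (dg a p) p :=
  (((hasDerivAt_pow 2 (Af p)).comp_hasFDerivAt p (hasAf p)).add ((hasBf p).const_mul a))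
lemma dA_apply (p v : Pt n m) : dA p v = ∑ j, 2 * p.1 j * v.1 j := by
  simp [dA, ContinuousLinearMap.sum_apply]
lemma dB_apply (p v : Pt n m) : dB p v = ∑ k, 2 * p.2 k * v.2 k := by
  simp [dB, ContinuousLinearMap.sum_apply]
lemma dA_apply_X (Λ : Fin m → Matrix (Fin n) (Fin n) ℝ) (i : Fin n) (p : Pt n m) :
    dA p (Xvec Λ i p) = 2 * p.1 i := by
  simp [dA_apply, Xvec, mul_ite, Finset.sum_ite_eq']
lemma dg_apply_X (Λ : Fin m → Matrix (Fin n) (Fin n) ℝ) (a : ℝ) (i : Fin n) (p : Pt n m) :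
    dg a p (Xvec Λ i p) = Ff Λ a i p := by
  simp only [dg, ContinuousLinearMap.add_apply, ContinuousLinearMap.smul_apply, smul_eq_mul,
    dA_apply_X, dB_apply, Ff]
  have h2 : ∑ k, 2 * p.2 k * (Xvec Λ i p).2 k = ∑ k, p.2 k * Lf Λ k i p := by
    refine Finset.sum_congr rfl fun k _ => ?_
    simp [Xvec, Lf]; ring
  rw [h2]; simp [Af]; ring
def dN (a : ℝ) (p : Pt n m) : Pt n m →L[ℝ] ℝ :=
  (((1:ℝ)/4 * gf a p ^ ((1:ℝ)/4 - 1)) • dg a p)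
lemma hasN (a : ℝ) (p : Pt n m) (h : gf a p ≠ 0) : HasFDerivAt (Nnorm a) (dN a p) p :=
  (hasgf a p).rpow_const (Or.inl h)
lemma XD_N (Λ : Fin m → Matrix (Fin n) (Fin n) ℝ) (a : ℝ) (i : Fin n) (p : Pt n m)
    (h : gf a p ≠ 0) :
    XD Λ (Nnorm a) i p = 1/4 * (gf a p ^ ((1:ℝ)/4 - 1) * Ff Λ a i p) := by
  rw [XD, (hasN a p h).fderiv]
  simp [dN, dg_apply_X]; ring
def Hf (Λ : Fin m → Matrix (Fin n) (Fin n) ℝ) (a : ℝ) (i : Fin n) (y : Pt n m) : ℝ :=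
  1/4 * (gf a y ^ ((1:ℝ)/4 - 1) * Ff Λ a i y)
def dL (Λ : Fin m → Matrix (Fin n) (Fin n) ℝ) (k : Fin m) (i : Fin n) : Pt n m →L[ℝ] ℝ :=
  ∑ l, (Λ k i l) • cx l
lemma hasLf (Λ : Fin m → Matrix (Fin n) (Fin n) ℝ) (k : Fin m) (i : Fin n) (p : Pt n m) :
    HasFDerivAt (Lf Λ k i) (dL Λ k i) p :=
  HasFDerivAt.fun_sum fun l _ => (hasX l p).const_mul (Λ k i l)
def dF (Λ : Fin m → Matrix (Fin n) (Fin n) ℝ) (a : ℝ) (i : Fin n) (p : Pt n m) :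
    Pt n m →L[ℝ] ℝ :=
  ((4 * Af p) • cx i + p.1 i • ((4:ℝ) • dA p)) +
    a • (∑ k, (p.2 k • dL Λ k i + Lf Λ k i p • cz k))
lemma hasFf (Λ : Fin m → Matrix (Fin n) (Fin n) ℝ) (a : ℝ) (i : Fin n) (p : Pt n m) :
    HasFDerivAt (Ff Λ a i) (dF Λ a i p) p :=
  (((hasAf p).const_mul 4).mul (hasX i p)).add
    ((HasFDerivAt.fun_sum fun k _ => (hasZ k p).mul (hasLf Λ k i p)).const_mul a)
def dH (Λ : Fin m → Matrix (Fin n) (Fin n) ℝ) (a : ℝ) (i : Fin n) (p : Pt n m) :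
    Pt n m →L[ℝ] ℝ :=
  ((1:ℝ)/4) • ((gf a p ^ ((1:ℝ)/4 - 1)) • dF Λ a i p +
    Ff Λ a i p • ((((1:ℝ)/4 - 1) * gf a p ^ ((1:ℝ)/4 - 1 - 1)) • dg a p))
lemma hasHf (Λ : Fin m → Matrix (Fin n) (Fin n) ℝ) (a : ℝ) (i : Fin n) (p : Pt n m)
    (h : gf a p ≠ 0) : HasFDerivAt (Hf Λ a i) (dH Λ a i p) p :=
  ((((hasgf a p).rpow_const (Or.inl h)).mul (hasFf Λ a i p)).const_mul (1/4))
lemma gf_cont (a : ℝ) : Continuous (gf (n:=n) (m:=m) a) := by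
  unfold gf Af Bf; fun_prop
lemma XXD (Λ : Fin m → Matrix (Fin n) (Fin n) ℝ) (a : ℝ) (i : Fin n) (p : Pt n m)
    (h : gf a p ≠ 0) :
    XD Λ (fun y => XD Λ (Nnorm a) i y) i p = dH Λ a i p (Xvec Λ i p) := by
  have ho : IsOpen {y : Pt n m | gf a y ≠ 0} :=
    IsOpen.preimage (gf_cont a) isOpen_compl_singleton
  have hev : (fun y => XD Λ (Nnorm a) i y) =ᶠ[nhds p] Hf Λ a i := by
    filter_upwards [ho.mem_nhds h] with y hy
    exact XD_N Λ a i y hy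
  rw [XD, hev.fderiv_eq, (hasHf Λ a i p h).fderiv]
lemma dL_apply_X (Λ : Fin m → Matrix (Fin n) (Fin n) ℝ) (k : Fin m) (i : Fin n) (p : Pt n m) :
    dL Λ k i (Xvec Λ i p) = Λ k i i := by
  simp [dL, ContinuousLinearMap.sum_apply, Xvec, mul_ite, Finset.sum_ite_eq']
lemma dF_apply_X (Λ : Fin m → Matrix (Fin n) (Fin n) ℝ) (a : ℝ) (i : Fin n) (p : Pt n m) :
    dF Λ a i p (Xvec Λ i p) =
      4 * Af p + 8 * p.1 i ^ 2 + a * ∑ k, (p.2 k * Λ k i i + 1/2 * Lf Λ k i p ^ 2) := by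
  simp only [dF, ContinuousLinearMap.add_apply, ContinuousLinearMap.smul_apply,
    ContinuousLinearMap.sum_apply, smul_eq_mul, dA_apply_X, dL_apply_X, cx_apply, cz_apply]
  have h1 : (Xvec Λ i p).1 i = 1 := by simp [Xvec]
  have h2 : ∀ k, (Xvec Λ i p).2 k = 1/2 * Lf Λ k i p := fun k => by simp [Xvec, Lf]
  rw [h1]
  have h3 : ∑ k, (p.2 k * Λ k i i + Lf Λ k i p * (Xvec Λ i p).2 k)
      = ∑ k, (p.2 k * Λ k i i + 1/2 * Lf Λ k i p ^ 2) := by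
    refine Finset.sum_congr rfl fun k _ => ?_
    rw [h2 k]; ring
  rw [h3]; ring
lemma XXD_val (Λ : Fin m → Matrix (Fin n) (Fin n) ℝ) (a : ℝ) (i : Fin n) (p : Pt n m)
    (h : gf a p ≠ 0) :
    XD Λ (fun y => XD Λ (Nnorm a) i y) i p =
      1/4 * (gf a p ^ ((1:ℝ)/4 - 1) *
          (4 * Af p + 8 * p.1 i ^ 2 + a * ∑ k, (p.2 k * Λ k i i + 1/2 * Lf Λ k i p ^ 2)) +
        ((1:ℝ)/4 - 1) * gf a p ^ ((1:ℝ)/4 - 1 - 1) * Ff Λ a i p ^ 2) := by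
  rw [XXD Λ a i p h]
  simp only [dH, ContinuousLinearMap.add_apply, ContinuousLinearMap.smul_apply, smul_eq_mul,
    dF_apply_X, dg_apply_X]
  ring

lemma skew_diag (Λ : Fin m → Matrix (Fin n) (Fin n) ℝ)
    (hskew : ∀ k, (Λ k).transpose = -(Λ k)) (k : Fin m) (i : Fin n) : Λ k i i = 0 := by
  have := congrFun (congrFun (hskew k) i) i
  simp [Matrix.transpose_apply, Matrix.neg_apply] at this
  linarith [this]
lemma skew_entry (Λ : Fin m → Matrix (Fin n) (Fin n) ℝ)
    (hskew : ∀ k, (Λ k).transpose = -(Λ k)) (k : Fin m) (i l : Fin n) :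
    Λ k l i = -(Λ k i l) := by
  have := congrFun (congrFun (hskew k) i) l
  simpa [Matrix.transpose_apply, Matrix.neg_apply] using this
lemma sum_xLx (Λ : Fin m → Matrix (Fin n) (Fin n) ℝ)
    (hskew : ∀ k, (Λ k).transpose = -(Λ k)) (k : Fin m) (x : Fin n → ℝ) :
    ∑ i, ∑ l, x i * Λ k i l * x l = 0 := by
  have key : ∑ i, ∑ l, x i * Λ k i l * x l = -(∑ i, ∑ l, x i * Λ k i l * x l) :=
    calc ∑ i, ∑ l, x i * Λ k i l * x l
        = ∑ l, ∑ i, x i * Λ k i l * x l := Finset.sum_comm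
      _ = ∑ l, ∑ i, -(x l * Λ k l i * x i) := by
          refine Finset.sum_congr rfl fun l _ => Finset.sum_congr rfl fun i _ => ?_
          rw [show Λ k i l = -(Λ k l i) from by rw [skew_entry Λ hskew k l i]]
          ring
      _ = -(∑ l, ∑ i, x l * Λ k l i * x i) := by
          rw [← Finset.sum_neg_distrib]
          exact Finset.sum_congr rfl fun l _ => Finset.sum_neg_distrib _
  linarith [key]
lemma swap2 {α β : Type*} [Fintype α] [Fintype β] (g : α → β → ℝ) :
    ∑ x, ∑ y, g x y = ∑ y, ∑ x, g x y := Finset.sum_comm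
lemma swap3 {α β γ : Type*} [Fintype α] [Fintype β] [Fintype γ] (g : α → β → γ → ℝ) :
    ∑ x, ∑ y, ∑ i, g x y i = ∑ i, ∑ x, ∑ y, g x y i := by
  have h1 : ∀ x, ∑ y, ∑ i, g x y i = ∑ i, ∑ y, g x y i := fun x => swap2 _
  simp_rw [h1]
  exact swap2 _
lemma swap4 {α β γ δ : Type*} [Fintype α] [Fintype β] [Fintype γ] [Fintype δ]
    (g : α → β → γ → δ → ℝ) :
    ∑ x, ∑ y, ∑ w, ∑ i, g x y w i = ∑ i, ∑ x, ∑ y, ∑ w, g x y w i := by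
  have h1 : ∀ x, ∑ y, ∑ w, ∑ i, g x y w i = ∑ i, ∑ y, ∑ w, g x y w i := fun x => swap3 _
  simp_rw [h1]
  exact swap2 _
lemma swap5 {α β γ δ ε : Type*} [Fintype α] [Fintype β] [Fintype γ] [Fintype δ] [Fintype ε]
    (g : α → β → γ → δ → ε → ℝ) :
    ∑ x, ∑ y, ∑ w, ∑ v, ∑ i, g x y w v i = ∑ i, ∑ x, ∑ y, ∑ w, ∑ v, g x y w v i := by
  have h1 : ∀ x, ∑ y, ∑ w, ∑ v, ∑ i, g x y w v i = ∑ i, ∑ y, ∑ w, ∑ v, g x y w v i :=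
    fun x => swap4 _
  simp_rw [h1]
  exact swap2 _

end S19

open S19 in
theorem statement_19 (n m : ℕ) (hn : 1 ≤ n) (hm : 1 ≤ m)
    (Λ : Fin m → Matrix (Fin n) (Fin n) ℝ)
    (hskew : ∀ k, (Λ k).transpose = -(Λ k))
    (hli : LinearIndependent ℝ Λ)
    (a : ℝ) (ha : 0 < a) :
    ∀ p : Pt n m, p.1 ≠ 0 →
      subLap Λ (Nnorm a) p =
        ((n : ℝ) - 1) * (∑ i, (p.1 i) ^ 2) / (Nnorm a p) ^ 3 +
        ((∑ i, (p.1 i) ^ 2) / (Nnorm a p) ^ 3) *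
          (-3 * ((-(a * ∑ k, (p.2 k) ^ 2) +
            a ^ 2 / 16 * ∑ k : Fin m, ∑ k' : Fin m, ∑ l : Fin n, ∑ l' : Fin n, ∑ i : Fin n,
              Λ k i l * Λ k' i l' * (p.1 l / Real.sqrt (∑ j, (p.1 j) ^ 2)) *
                (p.1 l' / Real.sqrt (∑ j, (p.1 j) ^ 2)) * p.2 k * p.2 k') / (Nnorm a p) ^ 4) +
          a / 8 * ∑ k : Fin m, ∑ l : Fin n, ∑ l' : Fin n, ∑ i : Fin n,
            Λ k i l * Λ k i l' * (p.1 l / Real.sqrt (∑ j, (p.1 j) ^ 2)) *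
              (p.1 l' / Real.sqrt (∑ j, (p.1 j) ^ 2))) := by
  intro p hp
  -- positivity facts
  have hA : 0 < Af p := by
    obtain ⟨j, hj⟩ := Function.ne_iff.mp hp
    exact Finset.sum_pos' (fun i _ => sq_nonneg _)
      ⟨j, Finset.mem_univ j, lt_of_le_of_ne (sq_nonneg _) (Ne.symm (pow_ne_zero 2 hj))⟩
  have hB : 0 ≤ Bf p := Finset.sum_nonneg fun k _ => sq_nonneg _
  have hg : 0 < gf a p := add_pos_of_pos_of_nonneg (pow_pos hA 2) (mul_nonneg ha.le hB)
  have htpos : 0 < gf a p ^ ((3:ℝ)/4) := Real.rpow_pos_of_pos hg _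
  -- rpow bookkeeping
  have hr : gf a p ^ ((1:ℝ)/4 - 1) = (gf a p ^ ((3:ℝ)/4))⁻¹ := by
    rw [← Real.rpow_neg hg.le]; congr 1; norm_num
  have hs : gf a p ^ ((1:ℝ)/4 - 1 - 1) = (gf a p ^ ((3:ℝ)/4) * gf a p)⁻¹ := by
    rw [show gf a p ^ ((3:ℝ)/4) * gf a p = gf a p ^ ((3:ℝ)/4 + 1) from by
      rw [Real.rpow_add hg, Real.rpow_one], ← Real.rpow_neg hg.le]
    congr 1; norm_num
  have hN3 : Nnorm a p ^ 3 = gf a p ^ ((3:ℝ)/4) := by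
    rw [show Nnorm a p = gf a p ^ ((1:ℝ)/4) from rfl,
      ← Real.rpow_natCast (gf a p ^ ((1:ℝ)/4)) 3, ← Real.rpow_mul hg.le]
    norm_num
  have hN4 : Nnorm a p ^ 4 = gf a p := by
    rw [show Nnorm a p = gf a p ^ ((1:ℝ)/4) from rfl,
      ← Real.rpow_natCast (gf a p ^ ((1:ℝ)/4)) 4, ← Real.rpow_mul hg.le]
    norm_num
  -- skew consequences
  have hzero : ∀ k, ∑ i, p.1 i * Lf Λ k i p = 0 := by
    intro k
    calc ∑ i, p.1 i * Lf Λ k i p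
        = ∑ i, ∑ l, p.1 i * Λ k i l * p.1 l := by
          refine Finset.sum_congr rfl fun i _ => ?_
          rw [show Lf Λ k i p = ∑ l, Λ k i l * p.1 l from rfl, Finset.mul_sum]
          exact Finset.sum_congr rfl fun l _ => by ring
      _ = 0 := sum_xLx Λ hskew k p.1
  have hcross : ∑ i, p.1 i * (∑ k, p.2 k * Lf Λ k i p) = 0 := by
    calc ∑ i, p.1 i * (∑ k, p.2 k * Lf Λ k i p)
        = ∑ i, ∑ k, p.2 k * (p.1 i * Lf Λ k i p) := by
          refine Finset.sum_congr rfl fun i _ => ?_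
          rw [Finset.mul_sum]
          exact Finset.sum_congr rfl fun k _ => by ring
      _ = ∑ k, ∑ i, p.2 k * (p.1 i * Lf Λ k i p) := Finset.sum_comm
      _ = ∑ k, p.2 k * ∑ i, p.1 i * Lf Λ k i p := by
          refine Finset.sum_congr rfl fun k _ => ?_
          rw [Finset.mul_sum]
      _ = 0 := by simp [hzero]
  -- sum of squares of Ff
  have hSF : ∑ i, Ff Λ a i p ^ 2
      = Af p * (16 * Af p ^ 2) + a ^ 2 * ∑ i, (∑ k, p.2 k * Lf Λ k i p) ^ 2 := by
    have e : ∀ i, Ff Λ a i p ^ 2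
        = (p.1 i) ^ 2 * (16 * Af p ^ 2) + (p.1 i * (∑ k, p.2 k * Lf Λ k i p)) * (8 * Af p * a)
          + (∑ k, p.2 k * Lf Λ k i p) ^ 2 * a ^ 2 := fun i => by rw [Ff]; ring
    rw [Finset.sum_congr rfl fun i _ => e i]
    simp only [Finset.sum_add_distrib, ← Finset.sum_mul]
    rw [hcross]
    rw [show (∑ i, (p.1 i) ^ 2) = Af p from rfl]
    ring
  -- per-i second derivative in final shape
  have e1 : ∀ i ∈ (Finset.univ : Finset (Fin n)),
      XD Λ (fun y => XD Λ (Nnorm a) i y) i p =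
        Af p * (gf a p ^ ((3:ℝ)/4))⁻¹ + (p.1 i) ^ 2 * (2 * (gf a p ^ ((3:ℝ)/4))⁻¹)
          + (∑ k, Lf Λ k i p ^ 2) * (a / 8 * (gf a p ^ ((3:ℝ)/4))⁻¹)
          + Ff Λ a i p ^ 2 * (-3/16 * (gf a p ^ ((3:ℝ)/4) * gf a p)⁻¹) := by
    intro i _
    rw [XXD_val Λ a i p hg.ne', hr, hs]
    have hdg : ∀ k : Fin m, Λ k i i = 0 := fun k => skew_diag Λ hskew k i
    simp only [hdg, mul_zero, zero_add]
    rw [← Finset.mul_sum]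
    ring
  have hLHS : subLap Λ (Nnorm a) p =
      (n : ℝ) * (Af p * (gf a p ^ ((3:ℝ)/4))⁻¹) + Af p * (2 * (gf a p ^ ((3:ℝ)/4))⁻¹)
        + (∑ i, ∑ k, Lf Λ k i p ^ 2) * (a / 8 * (gf a p ^ ((3:ℝ)/4))⁻¹)
        + (Af p * (16 * Af p ^ 2) + a ^ 2 * ∑ i, (∑ k, p.2 k * Lf Λ k i p) ^ 2)
            * (-3/16 * (gf a p ^ ((3:ℝ)/4) * gf a p)⁻¹) := by
    rw [subLap, Finset.sum_congr rfl e1]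
    simp only [Finset.sum_add_distrib, ← Finset.sum_mul, Finset.sum_const,
      Finset.card_univ, Fintype.card_fin, nsmul_eq_mul]
    rw [hSF, show (∑ i, (p.1 i) ^ 2) = Af p from rfl]
    ring
  -- T sums
  have hsq : Real.sqrt (∑ j, (p.1 j) ^ 2) * Real.sqrt (∑ j, (p.1 j) ^ 2) = Af p :=
    Real.mul_self_sqrt (Finset.sum_nonneg fun j _ => sq_nonneg _)
  have hinv : (Real.sqrt (∑ j, (p.1 j) ^ 2))⁻¹ * (Real.sqrt (∑ j, (p.1 j) ^ 2))⁻¹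
      = (Af p)⁻¹ := by rw [← mul_inv, hsq]
  have expand1 : ∀ (i : Fin n) (k : Fin m), Lf Λ k i p ^ 2
      = ∑ l, ∑ l', Λ k i l * Λ k i l' * p.1 l * p.1 l' := by
    intro i k
    rw [sq, show Lf Λ k i p = ∑ l, Λ k i l * p.1 l from rfl, Finset.sum_mul_sum]
    exact Finset.sum_congr rfl fun l _ => Finset.sum_congr rfl fun l' _ => by ring
  have expand2 : ∀ i : Fin n, (∑ k, p.2 k * Lf Λ k i p) ^ 2
      = ∑ k, ∑ k', ∑ l, ∑ l', Λ k i l * Λ k' i l' * p.1 l * p.1 l' * p.2 k * p.2 k' := by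
    intro i
    rw [sq, Finset.sum_mul_sum]
    refine Finset.sum_congr rfl fun k _ => Finset.sum_congr rfl fun k' _ => ?_
    rw [show p.2 k * Lf Λ k i p * (p.2 k' * Lf Λ k' i p)
        = (Lf Λ k i p * Lf Λ k' i p) * (p.2 k * p.2 k') from by ring,
      show Lf Λ k i p = ∑ l, Λ k i l * p.1 l from rfl,
      show Lf Λ k' i p = ∑ l', Λ k' i l' * p.1 l' from rfl,
      Finset.sum_mul_sum, Finset.sum_mul]
    refine Finset.sum_congr rfl fun l _ => ?_
    rw [Finset.sum_mul]
    exact Finset.sum_congr rfl fun l' _ => by ring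
  have hT1 : (∑ k : Fin m, ∑ l : Fin n, ∑ l' : Fin n, ∑ i : Fin n,
        Λ k i l * Λ k i l' * (p.1 l / Real.sqrt (∑ j, (p.1 j) ^ 2)) *
          (p.1 l' / Real.sqrt (∑ j, (p.1 j) ^ 2)))
      = (∑ i, ∑ k, Lf Λ k i p ^ 2) * (Af p)⁻¹ := by
    calc (∑ k : Fin m, ∑ l : Fin n, ∑ l' : Fin n, ∑ i : Fin n,
          Λ k i l * Λ k i l' * (p.1 l / Real.sqrt (∑ j, (p.1 j) ^ 2)) *
            (p.1 l' / Real.sqrt (∑ j, (p.1 j) ^ 2)))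
        = ∑ k : Fin m, ∑ l : Fin n, ∑ l' : Fin n, ∑ i : Fin n,
            (Λ k i l * Λ k i l' * p.1 l * p.1 l') * (Af p)⁻¹ := by
          refine Finset.sum_congr rfl fun k _ => Finset.sum_congr rfl fun l _ =>
            Finset.sum_congr rfl fun l' _ => Finset.sum_congr rfl fun i _ => ?_
          rw [div_eq_mul_inv, div_eq_mul_inv]
          linear_combination (Λ k i l * Λ k i l' * p.1 l * p.1 l') * hinv
      _ = (∑ k : Fin m, ∑ l : Fin n, ∑ l' : Fin n, ∑ i : Fin n,
            Λ k i l * Λ k i l' * p.1 l * p.1 l') * (Af p)⁻¹ := by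
          simp only [← Finset.sum_mul]
      _ = (∑ i : Fin n, ∑ k : Fin m, ∑ l : Fin n, ∑ l' : Fin n,
            Λ k i l * Λ k i l' * p.1 l * p.1 l') * (Af p)⁻¹ := by rw [swap4]
      _ = (∑ i, ∑ k, Lf Λ k i p ^ 2) * (Af p)⁻¹ := by
          congr 1
          exact Finset.sum_congr rfl fun i _ => Finset.sum_congr rfl fun k _ =>
            (expand1 i k).symm
  have hT2 : (∑ k : Fin m, ∑ k' : Fin m, ∑ l : Fin n, ∑ l' : Fin n, ∑ i : Fin n,
        Λ k i l * Λ k' i l' * (p.1 l / Real.sqrt (∑ j, (p.1 j) ^ 2)) *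
          (p.1 l' / Real.sqrt (∑ j, (p.1 j) ^ 2)) * p.2 k * p.2 k')
      = (∑ i, (∑ k, p.2 k * Lf Λ k i p) ^ 2) * (Af p)⁻¹ := by
    calc (∑ k : Fin m, ∑ k' : Fin m, ∑ l : Fin n, ∑ l' : Fin n, ∑ i : Fin n,
          Λ k i l * Λ k' i l' * (p.1 l / Real.sqrt (∑ j, (p.1 j) ^ 2)) *
            (p.1 l' / Real.sqrt (∑ j, (p.1 j) ^ 2)) * p.2 k * p.2 k')
        = ∑ k : Fin m, ∑ k' : Fin m, ∑ l : Fin n, ∑ l' : Fin n, ∑ i : Fin n,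
            (Λ k i l * Λ k' i l' * p.1 l * p.1 l' * p.2 k * p.2 k') * (Af p)⁻¹ := by
          refine Finset.sum_congr rfl fun k _ => Finset.sum_congr rfl fun k' _ =>
            Finset.sum_congr rfl fun l _ => Finset.sum_congr rfl fun l' _ =>
            Finset.sum_congr rfl fun i _ => ?_
          rw [div_eq_mul_inv, div_eq_mul_inv]
          linear_combination (Λ k i l * Λ k' i l' * p.1 l * p.1 l' * p.2 k * p.2 k') * hinv
      _ = (∑ k : Fin m, ∑ k' : Fin m, ∑ l : Fin n, ∑ l' : Fin n, ∑ i : Fin n,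
            Λ k i l * Λ k' i l' * p.1 l * p.1 l' * p.2 k * p.2 k') * (Af p)⁻¹ := by
          simp only [← Finset.sum_mul]
      _ = (∑ i : Fin n, ∑ k : Fin m, ∑ k' : Fin m, ∑ l : Fin n, ∑ l' : Fin n,
            Λ k i l * Λ k' i l' * p.1 l * p.1 l' * p.2 k * p.2 k') * (Af p)⁻¹ := by rw [swap5]
      _ = (∑ i, (∑ k, p.2 k * Lf Λ k i p) ^ 2) * (Af p)⁻¹ := by
          congr 1
          exact Finset.sum_congr rfl fun i _ => (expand2 i).symm
  -- final assembly
  rw [hLHS, hT1, hT2, hN3, hN4,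
    show (∑ i, (p.1 i) ^ 2) = Af p from rfl,
    show (∑ k, (p.2 k) ^ 2) = Bf p from rfl]
  have hgdef : gf a p = Af p ^ 2 + a * Bf p := rfl
  rw [hgdef] at htpos ⊢
  have h1 : Af p ≠ 0 := hA.ne'
  have h2 : (Af p ^ 2 + a * Bf p : ℝ) ≠ 0 := by rw [← hgdef]; exact hg.ne'
  have h3 : ((Af p ^ 2 + a * Bf p : ℝ) ^ ((3:ℝ)/4)) ≠ 0 := htpos.ne'
  field_simp
  ring
end
end
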